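/- Let p(x) = a_{2n+1}x^{2n+1} + ⋯ + a_1 x + a_0 be a real polynomial of odd degree 2n+1 with a_{2n+1} ≠ 0 and n ≥ 1. Then for every v ∈ ℝ the set Π(v) = {k ∈ ℤ : ∃ m ∈ ℤ, m ≠ k, p(k) − kv = p(m) − mv} is finite. -/
import Mathlib


open MeasureTheory Real Complex
open scoped ENNReal

/-- λ_k(v) = p(k) - k v -/
noncomputable def lamk (p : ℤ → ℝ) (v : ℝ) (k : ℤ) : ℝ := p k - k * v

/-- Ξ_k(v) = {m : λ_m(v) = λ_k(v)} -/
def XiSet (p : ℤ → ℝ) (v : ℝ) (k : ℤ) : Set ℤ := {m | lamk p v m = lamk p v k}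

/-- Π(v) = {k : ∃ m ≠ k, λ_k(v) = λ_m(v)} -/
def PiV (p : ℤ → ℝ) (v : ℝ) : Set ℤ := {k | ∃ m : ℤ, m ≠ k ∧ lamk p v k = lamk p v m}

/-- Λ(v) = {λ_k(v) : k ∈ ℤ} -/
def LamV (p : ℤ → ℝ) (v : ℝ) : Set ℝ := Set.range (lamk p v)

/-- γ'(v) = sup over finite W ⊆ Λ(v) of the separation gap of Λ(v) \ W, valued in ℝ≥0∞. -/
noncomputable def gammaP (p : ℤ → ℝ) (v : ℝ) : ℝ≥0∞ :=
  ⨆ (W : Finset ℝ) (_ : ↑W ⊆ LamV p v),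
    ⨅ (a : ℝ) (_ : a ∈ LamV p v \ ↑W) (b : ℝ) (_ : b ∈ LamV p v \ ↑W) (_ : a ≠ b),
      ENNReal.ofReal |a - b|

/-- The solution u(t,x) = ∑_k c_k e^{i(p(k)t + kx)} of ∂_t u = iP(D)u. -/
noncomputable def solD (p : ℤ → ℝ) (c : ℤ → ℂ) (t x : ℝ) : ℂ :=
  ∑' k : ℤ, c k * Complex.exp (Complex.I * ((p k : ℂ) * (t : ℂ) + (k : ℂ) * (x : ℂ)))

private lemma aux_nonneg (x y : ℝ) (hxy : 0 ≤ x * y) (N i : ℕ) (hi : i ≤ 2 * N) :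
    0 ≤ x ^ i * y ^ (2 * N - i) := by
  rcases le_or_gt i N with h | h
  · obtain ⟨j, hj⟩ : ∃ j, 2 * N - i = i + 2 * j := ⟨N - i, by omega⟩
    rw [hj, show x ^ i * y ^ (i + 2 * j) = (x * y) ^ i * ((y ^ 2) ^ j) by ring]
    exact mul_nonneg (pow_nonneg hxy i) (pow_nonneg (sq_nonneg y) j)
  · obtain ⟨l, j, hl, hi'⟩ : ∃ l j, 2 * N - i = l ∧ i = l + 2 * j :=
      ⟨2 * N - i, i - N, rfl, by omega⟩
    rw [hl, hi', show x ^ (l + 2 * j) * y ^ l = (x * y) ^ l * ((x ^ 2) ^ j) by ring]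
    exact mul_nonneg (pow_nonneg hxy l) (pow_nonneg (sq_nonneg x) j)

private lemma geom_symm (n : ℕ) (x y : ℝ) :
    ∑ i ∈ Finset.range n, x ^ i * y ^ (n - 1 - i)
      = ∑ i ∈ Finset.range n, y ^ i * x ^ (n - 1 - i) := by
  rw [← Finset.sum_range_reflect (fun j => y ^ j * x ^ (n - 1 - j)) n]
  refine Finset.sum_congr rfl fun i hi => ?_
  simp only [Finset.mem_range] at hi
  rw [show n - 1 - (n - 1 - i) = i from by omega]
  ring

private lemma geom_lb_aux (N : ℕ) (x y : ℝ) (hne : x ≠ y) (hle : |y| ≤ |x|) :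
    |x| ^ (2 * N) ≤
      2 * ∑ i ∈ Finset.range (2 * N + 1), x ^ i * y ^ (2 * N + 1 - 1 - i) := by
  have hmul := geom_sum₂_mul x y (2 * N + 1)
  simp only [Nat.add_sub_cancel] at hmul ⊢
  set S := ∑ i ∈ Finset.range (2 * N + 1), x ^ i * y ^ (2 * N - i) with hSdef
  have hxpow : |x| ^ (2 * N) = x ^ (2 * N) := by
    rw [pow_abs, _root_.abs_of_nonneg (Even.pow_nonneg (even_two_mul N) x)]
  rcases le_or_gt 0 (x * y) with hxy | hxy
  · have hterm : ∀ i ∈ Finset.range (2 * N + 1), 0 ≤ x ^ i * y ^ (2 * N - i) := by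
      intro i hi
      exact aux_nonneg x y hxy N i (by have := Finset.mem_range.mp hi; omega)
    have h1 : x ^ (2 * N) * y ^ (2 * N - 2 * N) ≤ S :=
      Finset.single_le_sum hterm (Finset.mem_range.mpr (by omega))
    have hS0 : 0 ≤ S := Finset.sum_nonneg hterm
    simp only [Nat.sub_self, pow_zero, mul_one] at h1
    rw [hxpow]; linarith
  · have hA0 : (0:ℝ) ≤ |x| ^ (2 * N) := pow_nonneg (abs_nonneg x) _
    rcases mul_neg_iff.mp hxy with ⟨hx, hy⟩ | ⟨hx, hy⟩
    · -- 0 < x, y < 0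
      have habs : |x| = x := abs_of_pos hx
      have hyabs : |y| = -y := abs_of_neg hy
      have hyodd : y ^ (2 * N + 1) ≤ 0 := Odd.pow_nonpos ⟨N, by ring⟩ hy.le
      have hd : 0 < x - y := by linarith
      have hd2 : x - y ≤ 2 * |x| := by rw [habs]; rw [hyabs] at hle; linarith
      have h1 : |x| ^ (2 * N) * x ≤ S * (x - y) := by
        rw [hmul, hxpow, ← pow_succ]
        linarith [hyodd]
      nlinarith [mul_le_mul_of_nonneg_left hd2 hA0, h1, hd, habs]
    · -- x < 0, 0 < y
      have habs : |x| = -x := abs_of_neg hx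
      have hyabs : |y| = y := abs_of_pos hy
      have hyodd : 0 ≤ y ^ (2 * N + 1) := pow_nonneg hy.le _
      have hxodd : x ^ (2 * N + 1) = x ^ (2 * N) * x := pow_succ x (2 * N)
      have hd : 0 < y - x := by linarith
      have hd2 : y - x ≤ 2 * |x| := by rw [habs]; rw [hyabs] at hle; linarith
      have h1 : |x| ^ (2 * N) * (-x) ≤ S * (y - x) := by
        have : S * (y - x) = y ^ (2 * N + 1) - x ^ (2 * N + 1) := by
          have := hmul; nlinarith [hmul]
        rw [this, hxpow, hxodd]
        nlinarith [hyodd]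
      nlinarith [mul_le_mul_of_nonneg_left hd2 hA0, h1, hd, habs]

private lemma geom_lb (N : ℕ) (x y : ℝ) (hne : x ≠ y) :
    (max |x| |y|) ^ (2 * N) ≤
      2 * ∑ i ∈ Finset.range (2 * N + 1), x ^ i * y ^ (2 * N + 1 - 1 - i) := by
  rcases le_total |y| |x| with h | h
  · rw [max_eq_left h]; exact geom_lb_aux N x y hne h
  · rw [max_eq_right h, geom_symm]; exact geom_lb_aux N y x hne.symm h

private lemma geom_ub (j D : ℕ) (x y M : ℝ) (hM : 1 ≤ M) (hx : |x| ≤ M) (hy : |y| ≤ M)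
    (hj : j ≤ D + 1) :
    |∑ i ∈ Finset.range j, x ^ i * y ^ (j - 1 - i)| ≤ (j : ℝ) * M ^ D := by
  have hM0 : (0:ℝ) ≤ M := le_trans zero_le_one hM
  calc |∑ i ∈ Finset.range j, x ^ i * y ^ (j - 1 - i)|
      ≤ ∑ i ∈ Finset.range j, |x ^ i * y ^ (j - 1 - i)| := Finset.abs_sum_le_sum_abs _ _
    _ ≤ ∑ _i ∈ Finset.range j, M ^ D := by
        refine Finset.sum_le_sum fun i hi => ?_
        rw [abs_mul, _root_.abs_pow, _root_.abs_pow]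
        have h1 : |x| ^ i * |y| ^ (j - 1 - i) ≤ M ^ i * M ^ (j - 1 - i) :=
          mul_le_mul (pow_le_pow_left₀ (abs_nonneg x) hx i)
            (pow_le_pow_left₀ (abs_nonneg y) hy _) (pow_nonneg (abs_nonneg y) _)
            (pow_nonneg hM0 i)
        rw [← pow_add] at h1
        refine h1.trans (pow_le_pow_right₀ hM ?_)
        have := Finset.mem_range.mp hi; omega
    _ = (j : ℝ) * M ^ D := by rw [Finset.sum_const, Finset.card_range, nsmul_eq_mul]

/-- For a real polynomial of odd degree 2n+1 ≥ 3, the set Π(v) is finite for every v. -/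
theorem stmt_11 (P : Polynomial ℝ) (n : ℕ) (hn : 1 ≤ n)
    (hdeg : P.natDegree = 2 * n + 1) :
    ∀ v : ℝ, (PiV (fun k => P.eval (k : ℝ)) v).Finite := by
  intro v
  have hP0 : P ≠ 0 := by intro h; rw [h] at hdeg; simp at hdeg
  set a : ℝ := P.coeff (2 * n + 1) with ha_def
  have ha : a ≠ 0 := by
    rw [ha_def, ← hdeg]
    exact Polynomial.leadingCoeff_ne_zero.mpr hP0
  set C : ℝ := (2 * n + 1 : ℝ) * ∑ j ∈ Finset.range (2 * n + 1), |P.coeff j| with hC_def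
  have hC0 : 0 ≤ C := by positivity
  set B : ℝ := max 1 (2 * (|v| + C) / |a|) with hB_def
  have hB1 : (1:ℝ) ≤ B := le_max_left _ _
  apply Set.Finite.subset (Set.finite_Icc (-⌈B⌉) ⌈B⌉)
  intro k hk
  obtain ⟨m, hmk, heq⟩ := hk
  suffices h : |(k : ℝ)| ≤ B by
    have hceil : B ≤ (⌈B⌉ : ℝ) := Int.le_ceil B
    have h1 : (k : ℝ) ≤ ((⌈B⌉ : ℤ) : ℝ) := le_trans (le_abs_self _) (h.trans hceil)
    have h2 : ((-⌈B⌉ : ℤ) : ℝ) ≤ (k : ℝ) := by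
      push_cast; linarith [neg_abs_le (k:ℝ)]
    exact Set.mem_Icc.mpr ⟨by exact_mod_cast h2, by exact_mod_cast h1⟩
  set x : ℝ := (k : ℝ) with hx_def
  set y : ℝ := (m : ℝ) with hy_def
  have hxy : x ≠ y := by
    simp only [hx_def, hy_def, ne_eq, Int.cast_inj]
    exact fun h' => hmk h'.symm
  set M : ℝ := max |x| |y| with hM_def
  have hxM : |x| ≤ M := le_max_left _ _
  have hyM : |y| ≤ M := le_max_right _ _
  rcases le_or_gt M 1 with hM1 | hM1
  · exact le_trans (hxM.trans hM1) hB1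
  have hM1' : (1:ℝ) ≤ M := hM1.le
  have hM0 : (0:ℝ) < M := lt_trans one_pos hM1
  have heval : ∀ z : ℝ, P.eval z = ∑ j ∈ Finset.range (2*n+1+1), P.coeff j * z ^ j := by
    intro z; rw [Polynomial.eval_eq_sum_range, hdeg]
  have heq' : P.eval x - x * v = P.eval y - y * v := by
    simpa [lamk] using heq
  set S : ℕ → ℝ := fun j => ∑ i ∈ Finset.range j, x ^ i * y ^ (j - 1 - i) with hS_def
  have key : ∑ j ∈ Finset.range (2*n+1+1), P.coeff j * S j = v := by
    have h1 : (∑ j ∈ Finset.range (2*n+1+1), P.coeff j * S j) * (x - y) = v * (x - y) := by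
      rw [Finset.sum_mul]
      have hterm : ∀ j, (P.coeff j * S j) * (x - y) = P.coeff j * (x ^ j - y ^ j) := by
        intro j; rw [hS_def, mul_assoc, geom_sum₂_mul]
      simp_rw [hterm]
      have hsub : ∑ j ∈ Finset.range (2*n+1+1), P.coeff j * (x^j - y^j)
          = P.eval x - P.eval y := by
        rw [heval x, heval y, ← Finset.sum_sub_distrib]
        exact Finset.sum_congr rfl fun j _ => by ring
      rw [hsub]
      linarith [heq']
    exact mul_right_cancel₀ (sub_ne_zero.mpr hxy) h1
  rw [Finset.sum_range_succ] at key
  have hlow : M ^ (2*n) ≤ 2 * S (2*n+1) := geom_lb n x y hxy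
  have hup : ∀ j ∈ Finset.range (2*n+1), |S j| ≤ (2*n+1 : ℝ) * M ^ (2*n-1) := by
    intro j hj
    have hj' : j ≤ (2*n-1) + 1 := by have := Finset.mem_range.mp hj; omega
    refine (geom_ub j (2*n-1) x y M hM1' hxM hyM hj').trans ?_
    have hjle : (j:ℝ) ≤ (2*n+1 : ℝ) := by
      have := Finset.mem_range.mp hj
      exact_mod_cast this.le
    exact mul_le_mul_of_nonneg_right (by exact_mod_cast hjle)
      (pow_nonneg (le_trans zero_le_one hM1') _)
  have hsum : |∑ j ∈ Finset.range (2*n+1), P.coeff j * S j| ≤ C * M ^ (2*n-1) := by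
    calc |∑ j ∈ Finset.range (2*n+1), P.coeff j * S j|
        ≤ ∑ j ∈ Finset.range (2*n+1), |P.coeff j * S j| := Finset.abs_sum_le_sum_abs _ _
      _ ≤ ∑ j ∈ Finset.range (2*n+1), |P.coeff j| * ((2*n+1 : ℝ) * M ^ (2*n-1)) := by
          refine Finset.sum_le_sum fun j hj => ?_
          rw [abs_mul]
          exact mul_le_mul_of_nonneg_left (hup j hj) (abs_nonneg _)
      _ = C * M ^ (2*n-1) := by rw [← Finset.sum_mul, hC_def]; ring
  have hS_nonneg : 0 ≤ S (2*n+1) := by nlinarith [hlow, pow_pos hM0 (2*n)]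
  have hmain : |a| * M ^ (2*n) ≤ 2 * (|v| + C * M ^ (2*n-1)) := by
    have heqn : a * S (2*n+1) = v - ∑ j ∈ Finset.range (2*n+1), P.coeff j * S j := by
      linarith [key]
    have h1 : |a * S (2*n+1)| ≤ |v| + C * M ^ (2*n-1) := by
      rw [heqn, sub_eq_add_neg]
      refine (abs_add_le _ _).trans ?_
      rw [abs_neg]
      linarith [hsum]
    have h3 : |a| * S (2*n+1) = |a * S (2*n+1)| := by
      rw [abs_mul, _root_.abs_of_nonneg hS_nonneg]
    nlinarith [mul_le_mul_of_nonneg_left hlow (abs_nonneg a), h1, h3]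
  have hMexp : M ^ (2*n) = M * M ^ (2*n - 1) := by
    rw [← pow_succ']
    congr 1; omega
  have hpowpos : (0:ℝ) < M ^ (2*n-1) := pow_pos hM0 _
  have hpow1 : (1:ℝ) ≤ M ^ (2*n-1) := one_le_pow₀ hM1'
  have hfin : |a| * M ≤ 2 * (|v| + C) := by
    have h1 : |a| * M * M ^ (2*n-1) ≤ 2 * (|v| + C) * M ^ (2*n-1) := by
      calc |a| * M * M ^ (2*n-1) = |a| * M ^ (2*n) := by rw [hMexp]; ring
        _ ≤ 2 * (|v| + C * M ^ (2*n-1)) := hmain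
        _ ≤ 2 * (|v| + C) * M ^ (2*n-1) := by nlinarith [hpow1, hC0, abs_nonneg v]
    exact le_of_mul_le_mul_right h1 hpowpos
  have hfinal : M ≤ 2 * (|v| + C) / |a| := by
    rw [le_div_iff₀ (abs_pos.mpr ha)]
    linarith [hfin, mul_comm M |a|]
  exact hxM.trans (hfinal.trans (le_max_right _ _))
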